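/- Let σ̂_1 ∈ Aut(F_n) be the automorphism taking x_1 to x_1^2 x_2, x_2 to x_2^{−1} x_1^{−1} x_2, and fixing all other free generators. If w ∈ F_n has reduced word of the form x_1^2 u, where u is a reduced word that does not begin with a letter x_1^{±1}, then the reduced word of σ̂_1(w) is of the form x_1^2 u', where u' is a reduced word that does not begin with a letter x_1^{±1}. -/

import Mathlib

open FreeGroup List
set_option linter.unusedSectionVars false
set_option maxHeartbeats 1000000
namespace Wada
variable {α : Type*} [DecidableEq α]
/-- non-cancelling adjacency -/
abbrev NC : (α × Bool) → (α × Bool) → Prop := fun a b => a.1 = b.1 → a.2 = b.2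

abbrev Rd (L : List (α × Bool)) : Prop := List.Chain' NC L

lemma reduce_eq_self {L : List (α × Bool)} (h : Rd L) : FreeGroup.reduce L = L := by
  induction L with
  | nil => rfl
  | cons x L ih =>
    have hL : Rd L := h.tail
    rw [FreeGroup.reduce.cons, ih hL]
    cases L with
    | nil => rfl
    | cons y t =>
      have hxy : NC x y := (List.isChain_cons_cons.1 h).1
      simp only []
      rw [if_neg]
      rintro ⟨h1, h2⟩
      have := hxy h1
      simp [this] at h2

lemma rd_reduce (L : List (α × Bool)) : Rd (FreeGroup.reduce L) := by
  induction L with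
  | nil => exact List.isChain_nil
  | cons x L ih =>
    rw [FreeGroup.reduce.cons]
    cases hr : FreeGroup.reduce L with
    | nil => exact List.isChain_singleton _
    | cons y t =>
      rw [hr] at ih
      by_cases hc : x.1 = y.1 ∧ x.2 = !y.2
      · simp only [if_pos hc]
        exact ih.tail
      · simp only [if_neg hc]
        refine List.isChain_cons_cons.2 ⟨?_, ih⟩
        intro h1
        by_contra h2
        exact hc ⟨h1, by cases x.2 <;> cases y.2 <;> simp_all⟩

lemma rd_toWord (x : FreeGroup α) : Rd x.toWord := by
  have := rd_reduce x.toWord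
  rwa [FreeGroup.reduce_toWord] at this

lemma toWord_mk_self {L : List (α × Bool)} (h : Rd L) : (FreeGroup.mk L).toWord = L := by
  rw [FreeGroup.toWord_mk, reduce_eq_self h]

lemma mk_single_tt (x : α) : FreeGroup.mk [(x, true)] = FreeGroup.of x := rfl

lemma mk_single_ff (x : α) : FreeGroup.mk [(x, false)] = (FreeGroup.of x)⁻¹ := by
  rw [← mk_single_tt, FreeGroup.inv_mk]; rfl

lemma mk_rep (k : ℕ) (x : α) (ε : Bool) :
    FreeGroup.mk (List.replicate k (x, ε)) = (FreeGroup.mk [(x, ε)]) ^ k := by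
  induction k with
  | zero => simp [FreeGroup.one_eq_mk]
  | succ k ih => rw [List.replicate_succ, ← List.singleton_append, ← FreeGroup.mul_mk, ih, pow_succ']

lemma mk_shape (p₀ : List (α × Bool)) (k : ℕ) (z w : α × Bool) :
    FreeGroup.mk (p₀ ++ List.replicate k z ++ [w]) =
      FreeGroup.mk p₀ * (FreeGroup.mk [z]) ^ k * FreeGroup.mk [w] := by
  rw [← FreeGroup.mul_mk, ← FreeGroup.mul_mk, mk_rep]

lemma mk_shape2 (p₀ : List (α × Bool)) (k : ℕ) (z : α × Bool) :
    FreeGroup.mk (p₀ ++ List.replicate k z) = FreeGroup.mk p₀ * (FreeGroup.mk [z]) ^ k := by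
  rw [← FreeGroup.mul_mk, mk_rep]

lemma mk_triple (z1 z2 z3 : α × Bool) :
    FreeGroup.mk [z1, z2, z3] = FreeGroup.mk [z1] * FreeGroup.mk [z2] * FreeGroup.mk [z3] := by
  rw [FreeGroup.mul_mk, FreeGroup.mul_mk]; rfl

/-- head constraint -/
def hne (L : List (α × Bool)) (z : α × Bool) : Prop := ∀ w ∈ L.head?, w ≠ z

lemma hne_next {L : List (α × Bool)} {y : α} {δ : Bool}
    (hadj : ∀ w ∈ L.head?, NC (y, δ) w) : hne L (y, !δ) := by
  intro w hw he
  have := hadj w hw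
  subst he
  have := this rfl
  simp at this

lemma rd_replicate (k : ℕ) (z : α × Bool) : Rd (List.replicate k z) :=
  List.isChain_replicate_of_rel k (fun _ => rfl)

lemma rd_shape {p₀ : List (α × Bool)} {x0 x1 : α} {k : ℕ} {ε : Bool} (h01 : x0 ≠ x1)
    (hp₀ : Rd p₀)
    (hlast : ∀ z ∈ p₀.getLast?, z.1 = x0 → z.2 = ε)
    (hlast2 : k = 0 → ∀ z ∈ p₀.getLast?, z.1 = x1 → z.2 = true) :
    Rd (p₀ ++ List.replicate k (x0, ε) ++ [(x1, true)]) := by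
  rw [List.append_assoc]
  refine List.isChain_append.mpr ⟨hp₀, ?_, ?_⟩
  · refine List.isChain_append.mpr ⟨rd_replicate _ _, List.isChain_singleton _, ?_⟩
    intro x hx y hy
    rcases k with _ | k
    · simp at hx
    · rw [List.replicate_succ'] at hx
      rw [List.getLast?_concat] at hx
      simp at hy
      cases hx; cases hy
      intro h; exact absurd h h01
  · intro x hx y hy
    rcases k with _ | k
    · simp at hy
      cases hy
      intro h
      exact hlast2 rfl x hx h
    · simp [List.replicate_succ] at hy
      cases hy
      intro h
      exact hlast x hx h

lemma rd_concat3 {p : List (α × Bool)} (hp : Rd p) {z1 z2 z3 : α × Bool}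
    (h12 : NC z1 z2) (h23 : NC z2 z3) (hj : ∀ z ∈ p.getLast?, NC z z1) :
    Rd (p ++ [z1, z2, z3]) := by
  exact List.isChain_append.mpr ⟨hp, List.isChain_cons_cons.2 ⟨h12, List.isChain_cons_cons.2 ⟨h23, List.isChain_singleton _⟩⟩,
    fun x hx y hy => by simp at hy; cases hy; exact hj x hx⟩

lemma rd_concat1 {p : List (α × Bool)} (hp : Rd p) {z1 : α × Bool}
    (hj : ∀ z ∈ p.getLast?, NC z z1) : Rd (p ++ [z1]) := by
  exact List.isChain_append.mpr ⟨hp, List.isChain_singleton _,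
    fun x hx y hy => by simp at hy; cases hy; exact hj x hx⟩

lemma head?_app {p X : List (α × Bool)} {w : α × Bool} (hh : p.head? = some w) :
    (p ++ X).head? = some w := by
  cases p with
  | nil => simp at hh
  | cons a t => simpa using hh

lemma head?_of_append {p₀ X : List (α × Bool)} {w : α × Bool} (h : p₀ ≠ [])
    (hh : (p₀ ++ X).head? = some w) : p₀.head? = some w := by
  cases p₀ with
  | nil => exact absurd rfl h
  | cons a t => simpa using hh

lemma getLast?_shape (p₀ : List (α × Bool)) (k : ℕ) (z w : α × Bool) :
    (p₀ ++ List.replicate k z ++ [w]).getLast? = some w := by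
  rw [List.getLast?_concat]

lemma getLast?_rep_succ (p₀ : List (α × Bool)) (k : ℕ) (z : α × Bool) :
    (p₀ ++ List.replicate (k + 1) z).getLast? = some z := by
  rw [List.replicate_succ', ← List.append_assoc, List.getLast?_concat]

/-- States of the transformation automaton. -/
def StA (x0 x1 : α) (p L : List (α × Bool)) : Prop :=
  ∃ p₀ k ε, p = p₀ ++ List.replicate k (x0, ε) ++ [(x1, true)] ∧ p₀ ≠ [] ∧
    (∀ z ∈ p₀.getLast?, z.1 ≠ x0 ∧ z ≠ (x1, false)) ∧
    ((k = 2 ∧ ε = true) → hne L (x0, false)) ∧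
    ((ε = true ∧ 3 ≤ k) → hne L (x1, true)) ∧
    ((ε = false ∨ k ≤ 1) → hne L (x1, false))

def StB (x0 x1 : α) (p L : List (α × Bool)) : Prop :=
  ∃ p₀ k ε, p = p₀ ++ List.replicate k (x0, ε) ++ [(x1, true)] ∧ p₀ ≠ [] ∧
    p₀.getLast? = some (x1, false) ∧ 1 ≤ k ∧ hne L (x1, ε)

def StX (x0 x1 : α) (p L : List (α × Bool)) : Prop :=
  (∃ z ∈ p.getLast?, z.1 = x0 ∨ z = (x1, false)) ∧ hne L (x0, true)

def StC (x0 x1 : α) (p L : List (α × Bool)) : Prop :=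
  ∃ c δ, p.getLast? = some (c, δ) ∧ c ≠ x0 ∧ c ≠ x1 ∧ hne L (c, !δ)

def St (x0 x1 : α) (p L : List (α × Bool)) : Prop :=
  StA x0 x1 p L ∨ StB x0 x1 p L ∨ StX x0 x1 p L ∨ StC x0 x1 p L


theorem master (x0 x1 : α) (h01 : x0 ≠ x1) (φ : FreeGroup α →* FreeGroup α)
    (hφ1 : φ (FreeGroup.of x0) = FreeGroup.of x0 ^ 2 * FreeGroup.of x1)
    (hφ2 : φ (FreeGroup.of x1) = (FreeGroup.of x1)⁻¹ * (FreeGroup.of x0)⁻¹ * FreeGroup.of x1)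
    (hφ3 : ∀ j, j ≠ x0 → j ≠ x1 → φ (FreeGroup.of j) = FreeGroup.of j) :
    ∀ L : List (α × Bool), Rd L → ∀ p : List (α × Bool), Rd p →
      p.head? = some (x1, true) → St x0 x1 p L →
      ∃ r, (FreeGroup.mk p * φ (FreeGroup.mk L)).toWord = (x1, true) :: r := by
  have h10 : x1 ≠ x0 := h01.symm
  have img_a : φ (FreeGroup.mk [(x0, true)]) = FreeGroup.mk [(x0,true),(x0,true),(x1,true)] := by
    rw [mk_single_tt, hφ1, mk_triple]; simp only [mk_single_tt, mk_single_ff]; rw [pow_two]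
  have img_A : φ (FreeGroup.mk [(x0, false)]) =
      FreeGroup.mk [(x1,false),(x0,false),(x0,false)] := by
    rw [mk_single_ff, _root_.map_inv, hφ1, mk_triple]
    simp only [mk_single_tt, mk_single_ff]; group
  have img_b : φ (FreeGroup.mk [(x1, true)]) = FreeGroup.mk [(x1,false),(x0,false),(x1,true)] := by
    rw [mk_single_tt, hφ2, mk_triple]; simp only [mk_single_tt, mk_single_ff]
  have img_B : φ (FreeGroup.mk [(x1, false)]) = FreeGroup.mk [(x1,false),(x0,true),(x1,true)] := by
    rw [mk_single_ff, _root_.map_inv, hφ2, mk_triple]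
    simp only [mk_single_tt, mk_single_ff]; group
  have img_c : ∀ (y : α) (δ : Bool), y ≠ x0 → y ≠ x1 →
      φ (FreeGroup.mk [(y, δ)]) = FreeGroup.mk [(y, δ)] := by
    intro y δ hy0 hy1
    cases δ
    · rw [mk_single_ff, _root_.map_inv, hφ3 y hy0 hy1]
    · rw [mk_single_tt, hφ3 y hy0 hy1]
  intro L
  induction L with
  | nil =>
    intro _ p hp hh _
    refine ⟨p.tail, ?_⟩
    rw [show FreeGroup.mk ([] : List (α × Bool)) = 1 from rfl, _root_.map_one, mul_one, toWord_mk_self hp]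
    cases p with
    | nil => simp at hh
    | cons w t => simp at hh; rw [hh]; rfl
  | cons ℓ L ih =>
    intro hL p hp hh hst
    have hL' : Rd L := hL.tail
    have hadj : ∀ w ∈ L.head?, NC ℓ w := (List.isChain_cons.1 hL).1
    have hsplit : FreeGroup.mk (ℓ :: L) = FreeGroup.mk [ℓ] * FreeGroup.mk L := by
      rw [FreeGroup.mul_mk]; rfl
    have key : ∀ p' : List (α × Bool),
        FreeGroup.mk p * φ (FreeGroup.mk [ℓ]) = FreeGroup.mk p' → Rd p' →
        p'.head? = some (x1, true) → St x0 x1 p' L →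
        ∃ r, (FreeGroup.mk p * φ (FreeGroup.mk (ℓ :: L))).toWord = (x1, true) :: r := by
      intro p' hmul hrd hh' hst'
      rw [hsplit, _root_.map_mul, ← mul_assoc, hmul]
      exact ih hL' p' hrd hh' hst'
    obtain ⟨y, δ⟩ := ℓ
    rcases hst with hA | hB | hX | hC
    · -- State A
      obtain ⟨p₀, k, ε, rfl, hp₀ne, hlastA, hc2, hc3, hc4⟩ := hA
      have hrd1 : Rd (p₀ ++ List.replicate k (x0, ε)) := (List.isChain_append.mp hp).1
      have hrdp₀ : Rd p₀ := (List.isChain_append.mp hrd1).1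
      have hh1 : (p₀ ++ List.replicate k (x0, ε)).head? = some (x1, true) :=
        head?_of_append (by simp [hp₀ne]) hh
      have hh₀ : p₀.head? = some (x1, true) := head?_of_append hp₀ne hh1
      have hlastp : (p₀ ++ List.replicate k (x0, ε) ++ [(x1, true)]).getLast? =
          some (x1, true) := List.getLast?_concat
      -- helper for rd_shape with p₀ and x0-run
      have hlastfun : ∀ (ε' : Bool), ∀ z ∈ p₀.getLast?, z.1 = x0 → z.2 = ε' := by
        intro ε' z hz h; exact absurd h (hlastA z hz).1
      have hlast2fun : ∀ z ∈ p₀.getLast?, z.1 = x1 → z.2 = true := by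
        intro z hz h
        have h2 := (hlastA z hz).2
        rcases z with ⟨z1, z2⟩
        cases z2
        · simp only at h; exact absurd (by rw [h]) h2
        · rfl
      by_cases hy0 : y = x0
      · subst y
        cases δ
        · -- letter (x0, false)
          have hkε : ¬(k = 2 ∧ ε = true) := fun h => (hc2 h) (x0, false) rfl rfl
          have hXne : hne L (x0, true) := by
            have := hne_next (y := x0) (δ := false) hadj; simpa using this
          have hjB : ∀ (ε' : Bool) (k' : ℕ), Rd (p₀ ++ List.replicate k' (x0, ε')) := by
            intro ε' k'
            refine List.isChain_append.mpr ⟨hrdp₀, rd_replicate _ _, ?_⟩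
            intro zz hz ww hw
            rcases k' with _ | k'
            · simp at hw
            · simp [List.replicate_succ] at hw
              subst hw
              intro h; exact absurd h (hlastA zz hz).1
          cases ε
          · -- ε = false
            refine key (p₀ ++ List.replicate (k + 2) (x0, false)) ?_ (hjB false (k+2)) 
              (head?_app hh₀) (Or.inr (Or.inr (Or.inl ⟨⟨(x0, false), ?_, Or.inl rfl⟩, hXne⟩)))
            · rw [img_A, mk_triple, mk_shape, mk_shape2]
              simp only [mk_single_tt, mk_single_ff]
              group
            · exact getLast?_rep_succ p₀ (k+1) (x0, false)
          · -- ε = true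
            rcases k with _ | _ | _ | m
            · refine key (p₀ ++ List.replicate 2 (x0, false)) ?_ (hjB false 2)
                (head?_app hh₀) (Or.inr (Or.inr (Or.inl ⟨⟨(x0, false),
                  getLast?_rep_succ p₀ 1 (x0, false), Or.inl rfl⟩, hXne⟩)))
              rw [img_A, mk_triple, mk_shape, mk_shape2]
              simp only [mk_single_tt, mk_single_ff]
              group
            · refine key (p₀ ++ List.replicate 1 (x0, false)) ?_ (hjB false 1)
                (head?_app hh₀) (Or.inr (Or.inr (Or.inl ⟨⟨(x0, false),
                  getLast?_rep_succ p₀ 0 (x0, false), Or.inl rfl⟩, hXne⟩)))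
              rw [img_A, mk_triple, mk_shape, mk_shape2]
              simp only [mk_single_tt, mk_single_ff]
              group
            · exact absurd ⟨rfl, rfl⟩ hkε
            · refine key (p₀ ++ List.replicate (m + 1) (x0, true)) ?_ (hjB true (m+1))
                (head?_app hh₀) (Or.inr (Or.inr (Or.inl ⟨⟨(x0, true),
                  getLast?_rep_succ p₀ m (x0, true), Or.inl rfl⟩, hXne⟩)))
              rw [img_A, mk_triple, mk_shape, mk_shape2]
              simp only [mk_single_tt, mk_single_ff]
              group
        · -- letter (x0, true) : append (a a b)
          refine key (p₀ ++ List.replicate k (x0, ε) ++ [(x1, true)] ++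
              List.replicate 2 (x0, true) ++ [(x1, true)]) ?_ ?_ (head?_app (head?_app hh)) ?_
          · rw [img_a, FreeGroup.mul_mk]
            congr 1
            simp
          · refine rd_shape h01 hp ?_ (by omega)
            intro z hz h
            rw [hlastp] at hz
            cases hz
            exact absurd h h10
          · refine Or.inl ⟨_, 2, true, rfl, by simp, ?_, ?_, ?_, ?_⟩
            · intro z hz
              rw [hlastp] at hz
              cases hz
              exact ⟨h10, by simp⟩
            · intro _
              have := hne_next (y := x0) (δ := true) hadj; simpa using this
            · intro h
              exfalso
              omega
            · intro h
              exfalso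
              rcases h with h | h
              · simp at h
              · omega
      · by_cases hy1 : y = x1
        · subst y
          cases δ
          · -- letter (x1, false) : B
            have hεk : ε = true ∧ 2 ≤ k := by
              constructor
              · by_contra h
                have : ε = false := by cases ε; rfl; exact absurd rfl h
                exact (hc4 (Or.inl this)) (x1, false) rfl rfl
              · by_contra h
                exact (hc4 (Or.inr (by omega))) (x1, false) rfl rfl
            obtain ⟨rfl, hk2⟩ := hεk
            rcases k with _ | _ | m
            · omega
            · omega
            · refine key (p₀ ++ List.replicate (m + 3) (x0, true) ++ [(x1, true)]) ?_
                (rd_shape h01 hrdp₀ (hlastfun true) (by omega)) (head?_app (head?_app hh₀)) ?_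
              · rw [img_B, mk_triple, mk_shape, mk_shape]
                simp only [mk_single_tt, mk_single_ff]
                group
              · refine Or.inl ⟨p₀, m + 3, true, rfl, hp₀ne, hlastA, ?_, ?_, ?_⟩
                · intro h
                  exfalso
                  omega
                · intro _
                  have := hne_next (y := x1) (δ := false) hadj; simpa using this
                · intro h
                  exfalso
                  rcases h with h | h
                  · simp at h
                  · omega
          · -- letter (x1, true) : b
            have hkb : ¬(ε = true ∧ 3 ≤ k) := fun h => (hc3 h) (x1, true) rfl rfl
            have hneB : hne L (x1, false) := by
              have := hne_next (y := x1) (δ := true) hadj; simpa using this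
            cases ε
            · -- ε = false: (k+1, false)
              refine key (p₀ ++ List.replicate (k + 1) (x0, false) ++ [(x1, true)]) ?_
                (rd_shape h01 hrdp₀ (hlastfun false) (by omega)) (head?_app (head?_app hh₀)) ?_
              · rw [img_b, mk_triple, mk_shape, mk_shape]
                simp only [mk_single_tt, mk_single_ff]
                group
              · refine Or.inl ⟨p₀, k + 1, false, rfl, hp₀ne, hlastA, ?_, ?_, ?_⟩
                · intro h; simp at h
                · intro h; simp at h
                · intro _; exact hneB
            · rcases k with _ | _ | _ | m
              · -- k = 0 → (1, false)
                refine key (p₀ ++ List.replicate 1 (x0, false) ++ [(x1, true)]) ?_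
                  (rd_shape h01 hrdp₀ (hlastfun false) (by omega)) (head?_app (head?_app hh₀)) ?_
                · rw [img_b, mk_triple, mk_shape, mk_shape]
                  simp only [mk_single_tt, mk_single_ff]
                  group
                · refine Or.inl ⟨p₀, 1, false, rfl, hp₀ne, hlastA, ?_, ?_, ?_⟩
                  · intro h; omega
                  · intro h; simp at h
                  · intro _; exact hneB
              · -- k = 1 → (0, true)
                refine key (p₀ ++ List.replicate 0 (x0, true) ++ [(x1, true)]) ?_
                  (rd_shape h01 hrdp₀ (hlastfun true) (fun _ => hlast2fun))
                  (head?_app (head?_app hh₀)) ?_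
                · rw [img_b, mk_triple, mk_shape, mk_shape]
                  simp only [mk_single_tt, mk_single_ff]
                  group
                · refine Or.inl ⟨p₀, 0, true, rfl, hp₀ne, hlastA, ?_, ?_, ?_⟩
                  · intro h; omega
                  · intro h; omega
                  · intro _; exact hneB
              · -- k = 2 → (1, true)
                refine key (p₀ ++ List.replicate 1 (x0, true) ++ [(x1, true)]) ?_
                  (rd_shape h01 hrdp₀ (hlastfun true) (by omega)) (head?_app (head?_app hh₀)) ?_
                · rw [img_b, mk_triple, mk_shape, mk_shape]
                  simp only [mk_single_tt, mk_single_ff]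
                  group
                · refine Or.inl ⟨p₀, 1, true, rfl, hp₀ne, hlastA, ?_, ?_, ?_⟩
                  · intro h; omega
                  · intro h; omega
                  · intro _; exact hneB
              · exact absurd ⟨rfl, by omega⟩ hkb
        · -- other generator
          refine key (p₀ ++ List.replicate k (x0, ε) ++ [(x1, true)] ++ [(y, δ)]) ?_ ?_
            (head?_app hh) ?_
          · rw [img_c y δ hy0 hy1, FreeGroup.mul_mk]
          · refine rd_concat1 hp ?_
            intro z hz
            rw [hlastp] at hz
            cases hz
            intro h; exact absurd h.symm hy1
          · refine Or.inr (Or.inr (Or.inr ⟨y, δ, List.getLast?_concat, hy0, hy1, ?_⟩))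
            exact hne_next hadj
    · -- State B
      obtain ⟨p₀, k, ε, rfl, hp₀ne, hlastB, hk1, hcb⟩ := hB
      have hrd1 : Rd (p₀ ++ List.replicate k (x0, ε)) := (List.isChain_append.mp hp).1
      have hrdp₀ : Rd p₀ := (List.isChain_append.mp hrd1).1
      have hh1 : (p₀ ++ List.replicate k (x0, ε)).head? = some (x1, true) :=
        head?_of_append (by simp [hp₀ne]) hh
      have hh₀ : p₀.head? = some (x1, true) := head?_of_append hp₀ne hh1
      have hlastp : (p₀ ++ List.replicate k (x0, ε) ++ [(x1, true)]).getLast? =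
          some (x1, true) := List.getLast?_concat
      have hlastfun : ∀ (ε' : Bool), ∀ z ∈ p₀.getLast?, z.1 = x0 → z.2 = ε' := by
        intro ε' z hz h
        rw [hlastB] at hz
        cases hz
        exact absurd h h10
      have hjB : ∀ (ε' : Bool) (k' : ℕ), Rd (p₀ ++ List.replicate k' (x0, ε')) := by
        intro ε' k'
        refine List.isChain_append.mpr ⟨hrdp₀, rd_replicate _ _, ?_⟩
        intro zz hz ww hw
        rcases k' with _ | k'
        · simp at hw
        · simp [List.replicate_succ] at hw
          subst hw
          rw [hlastB] at hz
          cases hz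
          intro h; exact absurd h h10
      by_cases hy0 : y = x0
      · subst y
        cases δ
        · -- letter (x0, false)
          have hXne : hne L (x0, true) := by
            have := hne_next (y := x0) (δ := false) hadj; simpa using this
          cases ε
          · refine key (p₀ ++ List.replicate (k + 2) (x0, false)) ?_ (hjB false (k+2))
              (head?_app hh₀) (Or.inr (Or.inr (Or.inl ⟨⟨(x0, false),
                getLast?_rep_succ p₀ (k+1) (x0, false), Or.inl rfl⟩, hXne⟩)))
            rw [img_A, mk_triple, mk_shape, mk_shape2]
            simp only [mk_single_tt, mk_single_ff]
            group
          · rcases k with _ | _ | m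
            · omega
            · refine key (p₀ ++ List.replicate 1 (x0, false)) ?_ (hjB false 1)
                (head?_app hh₀) (Or.inr (Or.inr (Or.inl ⟨⟨(x0, false),
                  getLast?_rep_succ p₀ 0 (x0, false), Or.inl rfl⟩, hXne⟩)))
              rw [img_A, mk_triple, mk_shape, mk_shape2]
              simp only [mk_single_tt, mk_single_ff]
              group
            · rcases m with _ | m
              · -- k = 2 : p' = p₀, ends (x1,false)
                refine key p₀ ?_ hrdp₀ hh₀ (Or.inr (Or.inr (Or.inl ⟨⟨(x1, false),
                  hlastB, Or.inr rfl⟩, hXne⟩)))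
                have : p₀ = p₀ ++ List.replicate 0 (x0, true) := by simp
                rw [img_A, mk_triple, mk_shape]
                nth_rewrite 2 [this]
                rw [mk_shape2]
                simp only [mk_single_tt, mk_single_ff]
                group
              · refine key (p₀ ++ List.replicate (m + 1) (x0, true)) ?_ (hjB true (m+1))
                  (head?_app hh₀) (Or.inr (Or.inr (Or.inl ⟨⟨(x0, true),
                    getLast?_rep_succ p₀ m (x0, true), Or.inl rfl⟩, hXne⟩)))
                rw [img_A, mk_triple, mk_shape, mk_shape2]
                simp only [mk_single_tt, mk_single_ff]
                group
        · -- letter (x0, true) : append (a a b)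
          refine key (p₀ ++ List.replicate k (x0, ε) ++ [(x1, true)] ++
              List.replicate 2 (x0, true) ++ [(x1, true)]) ?_ ?_ (head?_app (head?_app hh)) ?_
          · rw [img_a, FreeGroup.mul_mk]
            congr 1
            simp
          · refine rd_shape h01 hp ?_ (by omega)
            intro z hz h
            rw [hlastp] at hz
            cases hz
            exact absurd h h10
          · refine Or.inl ⟨_, 2, true, rfl, by simp, ?_, ?_, ?_, ?_⟩
            · intro z hz
              rw [hlastp] at hz
              cases hz
              exact ⟨h10, by simp⟩
            · intro _
              have := hne_next (y := x0) (δ := true) hadj; simpa using this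
            · intro h
              exfalso
              omega
            · intro h
              exfalso
              rcases h with h | h
              · simp at h
              · omega
      · by_cases hy1 : y = x1
        · subst y
          cases δ
          · -- letter (x1, false) : B ; requires ε = true
            cases ε
            · exact absurd rfl (hcb (x1, false) rfl)
            · refine key (p₀ ++ List.replicate (k + 1) (x0, true) ++ [(x1, true)]) ?_
                (rd_shape h01 hrdp₀ (hlastfun true) (by omega)) (head?_app (head?_app hh₀)) ?_
              · rw [img_B, mk_triple, mk_shape, mk_shape]
                simp only [mk_single_tt, mk_single_ff]
                group
              · refine Or.inr (Or.inl ⟨p₀, k + 1, true, rfl, hp₀ne, hlastB, by omega, ?_⟩)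
                have := hne_next (y := x1) (δ := false) hadj; simpa using this
          · -- letter (x1, true) : b ; requires ε = false
            cases ε
            · refine key (p₀ ++ List.replicate (k + 1) (x0, false) ++ [(x1, true)]) ?_
                (rd_shape h01 hrdp₀ (hlastfun false) (by omega)) (head?_app (head?_app hh₀)) ?_
              · rw [img_b, mk_triple, mk_shape, mk_shape]
                simp only [mk_single_tt, mk_single_ff]
                group
              · refine Or.inr (Or.inl ⟨p₀, k + 1, false, rfl, hp₀ne, hlastB, by omega, ?_⟩)
                have := hne_next (y := x1) (δ := true) hadj; simpa using this
            · exact absurd rfl (hcb (x1, true) rfl)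
        · -- other generator
          refine key (p₀ ++ List.replicate k (x0, ε) ++ [(x1, true)] ++ [(y, δ)]) ?_ ?_
            (head?_app hh) ?_
          · rw [img_c y δ hy0 hy1, FreeGroup.mul_mk]
          · refine rd_concat1 hp ?_
            intro z hz
            rw [hlastp] at hz
            cases hz
            intro h; exact absurd h.symm hy1
          · refine Or.inr (Or.inr (Or.inr ⟨y, δ, List.getLast?_concat, hy0, hy1, ?_⟩))
            exact hne_next hadj
    · -- State X
      obtain ⟨⟨z, hz, hzor⟩, hXne⟩ := hX
      have hjz : NC z (x1, false) := by
        intro h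
        rcases hzor with h' | h'
        · exact absurd (h'.symm.trans h) h01
        · rw [h']
      by_cases hy0 : y = x0
      · subst y
        cases δ
        · -- letter (x0, false)
          refine key (p ++ [(x1, false), (x0, false), (x0, false)]) ?_ ?_ (head?_app hh) ?_
          · rw [img_A, FreeGroup.mul_mk]
          · refine rd_concat3 hp ?_ ?_ ?_
            · intro h; exact absurd h h10
            · intro _; rfl
            · intro z' hz'
              rw [hz] at hz'
              cases hz'
              exact hjz
          · refine Or.inr (Or.inr (Or.inl ⟨⟨(x0, false), by simp, Or.inl rfl⟩, ?_⟩))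
            have := hne_next (y := x0) (δ := false) hadj; simpa using this
        · exact absurd rfl (hXne (x0, true) rfl)
      · by_cases hy1 : y = x1
        · subst y
          cases δ
          · -- letter (x1, false) : B
            refine key (p ++ [(x1, false), (x0, true), (x1, true)]) ?_ ?_ (head?_app hh) ?_
            · rw [img_B, FreeGroup.mul_mk]
            · refine rd_concat3 hp ?_ ?_ ?_
              · intro h; exact absurd h h10
              · intro h; exact absurd h (h01 : x0 ≠ x1)
              · intro z' hz'
                rw [hz] at hz'
                cases hz'
                exact hjz
            · refine Or.inr (Or.inl ⟨p ++ [(x1, false)], 1, true, by simp, by simp,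
                List.getLast?_concat, le_refl 1, ?_⟩)
              have := hne_next (y := x1) (δ := false) hadj; simpa using this
          · -- letter (x1, true) : b
            refine key (p ++ [(x1, false), (x0, false), (x1, true)]) ?_ ?_ (head?_app hh) ?_
            · rw [img_b, FreeGroup.mul_mk]
            · refine rd_concat3 hp ?_ ?_ ?_
              · intro h; exact absurd h h10
              · intro h; exact absurd h (h01 : x0 ≠ x1)
              · intro z' hz'
                rw [hz] at hz'
                cases hz'
                exact hjz
            · refine Or.inr (Or.inl ⟨p ++ [(x1, false)], 1, false, by simp, by simp,
                List.getLast?_concat, le_refl 1, ?_⟩)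
              have := hne_next (y := x1) (δ := true) hadj; simpa using this
        · -- other generator
          refine key (p ++ [(y, δ)]) ?_ ?_ (head?_app hh) ?_
          · rw [img_c y δ hy0 hy1, FreeGroup.mul_mk]
          · refine rd_concat1 hp ?_
            intro z' hz'
            rw [hz] at hz'
            cases hz'
            intro h
            rcases hzor with h' | h'
            · exact absurd (h'.symm.trans h).symm hy0
            · rw [h'] at h
              exact absurd h.symm hy1
          · refine Or.inr (Or.inr (Or.inr ⟨y, δ, List.getLast?_concat, hy0, hy1, ?_⟩))
            exact hne_next hadj
    · -- State C
      obtain ⟨c, δc, hlastc, hc0, hc1, hCne⟩ := hC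
      by_cases hy0 : y = x0
      · subst y
        cases δ
        · -- letter (x0, false)
          refine key (p ++ [(x1, false), (x0, false), (x0, false)]) ?_ ?_ (head?_app hh) ?_
          · rw [img_A, FreeGroup.mul_mk]
          · refine rd_concat3 hp ?_ ?_ ?_
            · intro h; exact absurd h h10
            · intro _; rfl
            · intro z' hz'
              rw [hlastc] at hz'
              cases hz'
              intro h; exact absurd h hc1
          · refine Or.inr (Or.inr (Or.inl ⟨⟨(x0, false), by simp, Or.inl rfl⟩, ?_⟩))
            have := hne_next (y := x0) (δ := false) hadj; simpa using this
        · -- letter (x0, true) : append (a a b)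
          refine key (p ++ List.replicate 2 (x0, true) ++ [(x1, true)]) ?_ ?_
            (head?_app (head?_app hh)) ?_
          · rw [img_a, FreeGroup.mul_mk]
            congr 1
            simp
          · refine rd_shape h01 hp ?_ (by omega)
            intro z hz h
            rw [hlastc] at hz
            cases hz
            exact absurd h hc0
          · refine Or.inl ⟨p, 2, true, rfl, ?_, ?_, ?_, ?_, ?_⟩
            · intro hemp
              rw [hemp] at hh
              simp at hh
            · intro z hz
              rw [hlastc] at hz
              cases hz
              refine ⟨hc0, ?_⟩
              intro heq
              rw [Prod.ext_iff] at heq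
              exact hc1 heq.1
            · intro _
              have := hne_next (y := x0) (δ := true) hadj; simpa using this
            · intro h
              exfalso
              omega
            · intro h
              exfalso
              rcases h with h | h
              · simp at h
              · omega
      · by_cases hy1 : y = x1
        · subst y
          cases δ
          · -- letter (x1, false) : B
            refine key (p ++ [(x1, false), (x0, true), (x1, true)]) ?_ ?_ (head?_app hh) ?_
            · rw [img_B, FreeGroup.mul_mk]
            · refine rd_concat3 hp ?_ ?_ ?_
              · intro h; exact absurd h h10
              · intro h; exact absurd h h01
              · intro z' hz'
                rw [hlastc] at hz'
                cases hz'
                intro h; exact absurd h hc1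
            · refine Or.inr (Or.inl ⟨p ++ [(x1, false)], 1, true, by simp, by simp,
                List.getLast?_concat, le_refl 1, ?_⟩)
              have := hne_next (y := x1) (δ := false) hadj; simpa using this
          · -- letter (x1, true) : b
            refine key (p ++ [(x1, false), (x0, false), (x1, true)]) ?_ ?_ (head?_app hh) ?_
            · rw [img_b, FreeGroup.mul_mk]
            · refine rd_concat3 hp ?_ ?_ ?_
              · intro h; exact absurd h h10
              · intro h; exact absurd h h01
              · intro z' hz'
                rw [hlastc] at hz'
                cases hz'
                intro h; exact absurd h hc1
            · refine Or.inr (Or.inl ⟨p ++ [(x1, false)], 1, false, by simp, by simp,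
                List.getLast?_concat, le_refl 1, ?_⟩)
              have := hne_next (y := x1) (δ := true) hadj; simpa using this
        · -- other generator
          refine key (p ++ [(y, δ)]) ?_ ?_ (head?_app hh) ?_
          · rw [img_c y δ hy0 hy1, FreeGroup.mul_mk]
          · refine rd_concat1 hp ?_
            intro z' hz'
            rw [hlastc] at hz'
            cases hz'
            intro h
            have h' : c = y := h
            subst y
            have hcy : (c, δ) ≠ (c, !δc) := hCne (c, δ) rfl
            show δc = δ
            cases δ <;> cases δc <;> simp_all
          · refine Or.inr (Or.inr (Or.inr ⟨y, δ, List.getLast?_concat, hy0, hy1, ?_⟩))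
            exact hne_next hadj

end Wada

/-- Let `σ̂_1 ∈ Aut(F_n)` be the automorphism with `x_1 ↦ x_1^2 x_2`,
`x_2 ↦ x_2⁻¹ x_1⁻¹ x_2`, fixing all other free generators (Wada's type (3)
generator automorphism). If `w ∈ F_n` has reduced word of the form `x_1^2 u` with
`u` a reduced word not beginning with a letter `x_1^{±1}`, then the reduced word of
`σ̂_1(w)` has the same form `x_1^2 u'`, with `u'` not beginning with a letter
`x_1^{±1}`. -/
theorem wada_type3_sigma1hat_preserves_form (n : ℕ) (hn : 2 ≤ n)
    (φ : MulAut (FreeGroup (Fin n)))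
    (hφ1 : φ (FreeGroup.of (⟨0, by omega⟩ : Fin n)) =
      FreeGroup.of (⟨0, by omega⟩ : Fin n) ^ 2 * FreeGroup.of (⟨1, by omega⟩ : Fin n))
    (hφ2 : φ (FreeGroup.of (⟨1, by omega⟩ : Fin n)) =
      (FreeGroup.of (⟨1, by omega⟩ : Fin n))⁻¹ * (FreeGroup.of (⟨0, by omega⟩ : Fin n))⁻¹ *
        FreeGroup.of (⟨1, by omega⟩ : Fin n))
    (hφ3 : ∀ j : Fin n, j ≠ ⟨0, by omega⟩ → j ≠ ⟨1, by omega⟩ →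
      φ (FreeGroup.of j) = FreeGroup.of j)
    (w u : FreeGroup (Fin n))
    (huhead : ∀ p ∈ u.toWord.head?, p.1 ≠ (⟨0, by omega⟩ : Fin n))
    (hw : w = FreeGroup.of (⟨0, by omega⟩ : Fin n) ^ 2 * u) :
    ∃ u' : FreeGroup (Fin n),
      (∀ p ∈ u'.toWord.head?, p.1 ≠ (⟨0, by omega⟩ : Fin n)) ∧
      φ w = FreeGroup.of (⟨0, by omega⟩ : Fin n) ^ 2 * u' := by
  classical
  set x0 : Fin n := ⟨0, by omega⟩ with hx0
  set x1 : Fin n := ⟨1, by omega⟩ with hx1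
  have h01 : x0 ≠ x1 := by
    simp [hx0, hx1, Fin.ext_iff]
  set p : List (Fin n × Bool) :=
    [(x1, true)] ++ List.replicate 2 (x0, true) ++ [(x1, true)] with hpdef
  have hp : Wada.Rd p := by
    refine Wada.rd_shape h01 (List.isChain_singleton _) ?_ (by omega)
    intro z hz h
    simp at hz
    subst hz
    exact absurd h h01.symm
  have hh : p.head? = some (x1, true) := rfl
  have hst : Wada.St x0 x1 p u.toWord := by
    refine Or.inl ⟨[(x1, true)], 2, true, rfl, by simp, ?_, ?_, ?_, ?_⟩
    · intro z hz
      simp at hz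
      subst hz
      exact ⟨h01.symm, by simp⟩
    · intro _
      intro q hq he
      have := huhead q hq
      rw [he] at this
      exact this rfl
    · intro h
      exfalso
      omega
    · intro h
      exfalso
      rcases h with h | h
      · simp at h
      · omega
  obtain ⟨r, hr⟩ := Wada.master x0 x1 h01 φ.toMonoidHom hφ1 hφ2 hφ3 u.toWord
    (Wada.rd_toWord u) p hp hh hst
  rw [FreeGroup.mk_toWord] at hr
  refine ⟨FreeGroup.mk p * φ u, ?_, ?_⟩
  · intro q hq
    have : (FreeGroup.mk p * φ.toMonoidHom u).toWord = (x1, true) :: r := hr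
    rw [show φ.toMonoidHom u = φ u from rfl] at this
    rw [this] at hq
    simp at hq
    subst hq
    exact h01.symm
  · subst hw
    rw [_root_.map_mul, _root_.map_pow, hφ1]
    have hmkp : FreeGroup.mk p = FreeGroup.of x1 * FreeGroup.of x0 ^ 2 * FreeGroup.of x1 := by
      rw [hpdef, Wada.mk_shape, Wada.mk_single_tt]
      rfl
    rw [hmkp, pow_two (FreeGroup.of x0 ^ 2 * FreeGroup.of x1)]
    simp only [mul_assoc]
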